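/- arXiv:1110.6782 — 4 statements merged into one kernel-verified Lean document; each statement's English description precedes it below -/
import Mathlib

section
/- Let h : ℕ → ℤ be a function and d an integer such that h(7) - 6·h(6) + 15·h(5) - 20·h(4) + 15·h(3) - 6·h(2) + h(1) = d and h(8) - 6·h(7) + 15·h(6) - 20·h(5) + 15·h(4) - 6·h(3) + h(2) = d. Suppose moreover that h(i) ≡ 0 (mod 9) for every i ∈ {1,2,4,5,7,8} (i.e., for i not divisible by 3). Then d ≡ 0 (mod 9). -/
theorem divisibility_n6 (h : ℕ → ℤ) (d : ℤ)
    (e1 : h 7 - 6 * h 6 + 15 * h 5 - 20 * h 4 + 15 * h 3 - 6 * h 2 + h 1 = d)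
    (e2 : h 8 - 6 * h 7 + 15 * h 6 - 20 * h 5 + 15 * h 4 - 6 * h 3 + h 2 = d)
    (hmod : ∀ i ∈ ({1, 2, 4, 5, 7, 8} : Finset ℕ), (9 : ℤ) ∣ h i) :
    (9 : ℤ) ∣ d := by
  obtain ⟨a1, h1⟩ := hmod 1 (by decide)
  obtain ⟨a2, h2⟩ := hmod 2 (by decide)
  obtain ⟨a4, h4⟩ := hmod 4 (by decide)
  obtain ⟨a5, h5⟩ := hmod 5 (by decide)
  obtain ⟨a7, h7⟩ := hmod 7 (by decide)
  obtain ⟨a8, h8⟩ := hmod 8 (by decide)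
  omega
end

section
/- Let h : ℕ → ℤ and d an integer such that h(6) - 5·h(5) + 10·h(4) - 10·h(3) + 5·h(2) - h(1) = d and h(7) - 5·h(6) + 10·h(5) - 10·h(4) + 5·h(3) - h(2) = d, and suppose h(i) ≡ 0 (mod 9) for all i ∈ {1,2,4,5,7} (i.e., i not divisible by 3). Then d is divisible by 3. -/
theorem divisibility_n5 (h : ℕ → ℤ) (d : ℤ)
    (e1 : h 6 - 5 * h 5 + 10 * h 4 - 10 * h 3 + 5 * h 2 - h 1 = d)
    (e2 : h 7 - 5 * h 6 + 10 * h 5 - 10 * h 4 + 5 * h 3 - h 2 = d)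
    (hmod : ∀ i ∈ ({1, 2, 4, 5, 7} : Finset ℕ), (9 : ℤ) ∣ h i) :
    (3 : ℤ) ∣ d := by
  obtain ⟨a1, h1⟩ := hmod 1 (by decide)
  obtain ⟨a2, h2⟩ := hmod 2 (by decide)
  obtain ⟨a4, h4⟩ := hmod 4 (by decide)
  obtain ⟨a5, h5⟩ := hmod 5 (by decide)
  obtain ⟨a7, h7⟩ := hmod 7 (by decide)
  -- 5*e1 + e2 : h7 - 15 h5 + 40 h4 - 45 h3 + 24 h2 - 5 h1 = 6 d
  have key : h 7 - 15 * h 5 + 40 * h 4 - 45 * h 3 + 24 * h 2 - 5 * h 1 = 6 * d := by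
    linarith
  rw [h1, h2, h4, h5, h7] at key
  omega
end

section
/- There is no polynomial H of degree at most 3 with rational coefficients such that H(1), ..., H(6) are non-decreasing, H(1) ∈ {0, 9}, H(2) ∈ {0, 45}, H(3) is a sum of a sub-multiset of [160, 160, 160, 160, 160] (i.e., H(3) ∈ {0, 160, 320, 480, 640, 800}), H(4) is a partial sum of the multiset [45, 180, 270], H(5) is a partial sum of the multiset [36, 90, 135, 216, 270, 540], H(6) is a partial sum of the multiset [1, 1, 1, 1, 15, 24, 80, 80, 240, 240, 240, 480, 480, 480, 640] (sums of arbitrary sub-multisets), and H(1) > 0. -/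
/-- `x` is a sum of a sub-multiset of `M`. -/
def IsPartialSum (M : Multiset ℤ) (x : ℤ) : Prop :=
  ∃ s : Multiset ℤ, s ≤ M ∧ s.sum = x

/-- The multiset of all partial sums of `M`. -/
def psums (M : Multiset ℤ) : Multiset ℤ := M.powerset.map Multiset.sum

lemma mem_psums {M : Multiset ℤ} {x : ℤ} (h : IsPartialSum M x) : x ∈ psums M := by
  obtain ⟨s, hs, rfl⟩ := h
  exact Multiset.mem_map_of_mem _ (Multiset.mem_powerset.mpr hs)

lemma psums_nine : ∀ x ∈ psums {9}, x = 0 ∨ x = 9 := by decide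

lemma psums_45 : ∀ x ∈ psums {45}, x = 0 ∨ x = 45 := by decide

set_option maxHeartbeats 2000000 in
lemma key : ∀ x3 ∈ psums {160, 160, 160, 160, 160}, ∀ x4 ∈ psums {45, 180, 270},
    ¬(45 ≤ x3 ∧ x3 ≤ x4 ∧ x4 ≤ 4*x4 - 6*x3 + 171 ∧
      (4*x4 - 6*x3 + 171) ∈ psums {36, 90, 135, 216, 270, 540}) := by
  decide

theorem no_cubic_hilbert_function :
    ¬ ∃ (H : Polynomial ℚ) (h : ℕ → ℤ),
      H.degree ≤ 3 ∧
      (∀ m ∈ Finset.Icc 1 6, (h m : ℚ) = H.eval (m : ℚ)) ∧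
      (∀ i ∈ Finset.Icc 1 5, h i ≤ h (i + 1)) ∧
      IsPartialSum {9} (h 1) ∧
      IsPartialSum {45} (h 2) ∧
      IsPartialSum {160, 160, 160, 160, 160} (h 3) ∧
      IsPartialSum {45, 180, 270} (h 4) ∧
      IsPartialSum {36, 90, 135, 216, 270, 540} (h 5) ∧
      IsPartialSum {4, 15, 24, 80, 80, 240, 240, 240, 480, 480, 480, 640} (h 6) ∧
      0 < h 1 := by
  rintro ⟨H, h, hdeg, heval, hmono, p1, p2, p3, p4, p5, p6, hpos⟩
  have hnd : H.natDegree < 4 :=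
    lt_of_le_of_lt (Polynomial.natDegree_le_iff_degree_le.mpr hdeg) (by norm_num)
  have hev : ∀ x : ℚ, H.eval x =
      H.coeff 0 + H.coeff 1 * x + H.coeff 2 * x ^ 2 + H.coeff 3 * x ^ 3 := by
    intro x
    rw [Polynomial.eval_eq_sum_range' hnd]
    simp [Finset.sum_range_succ]
  have E : ∀ m ∈ Finset.Icc 1 6, (h m : ℚ) =
      H.coeff 0 + H.coeff 1 * (m : ℚ) + H.coeff 2 * (m : ℚ) ^ 2 + H.coeff 3 * (m : ℚ) ^ 3 := by
    intro m hm
    rw [heval m hm, hev]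
  have E1 := E 1 (by decide); have E2 := E 2 (by decide); have E3 := E 3 (by decide)
  have E4 := E 4 (by decide); have E5 := E 5 (by decide)
  have e1Q : ((h 1 - 4 * h 2 + 6 * h 3 - 4 * h 4 + h 5 : ℤ) : ℚ) = 0 := by
    push_cast [E1, E2, E3, E4, E5]
    ring
  have e1 : h 1 - 4 * h 2 + 6 * h 3 - 4 * h 4 + h 5 = 0 := by exact_mod_cast e1Q
  have h1v := psums_nine _ (mem_psums p1)
  have h2v := psums_45 _ (mem_psums p2)
  have m1 := hmono 1 (by decide)
  have m2 := hmono 2 (by decide)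
  have m3 := hmono 3 (by decide)
  have m4 := hmono 4 (by decide)
  norm_num at m1 m2 m3 m4
  have h1e : h 1 = 9 := by omega
  have h2e : h 2 = 45 := by omega
  have h5e : h 5 = 4 * h 4 - 6 * h 3 + 171 := by omega
  refine key _ (mem_psums p3) _ (mem_psums p4) ⟨by omega, by omega, by omega, ?_⟩
  rw [← h5e]
  exact mem_psums p5
end

section
/- Let h : ℕ → ℤ satisfy h(1) = 9, h(2) = 45, and suppose h agrees on {1,...,6} with a polynomial of degree at most 3. If additionally h(3) ∈ {0, 160, 320, 480, 640, 800} and h(3) ≥ h(2), then h(3) = 160 forces the cubic interpolating (1,9), (2,45), (3,160) together with any admissible value h(4) ∈ {0, 45, 180, 225, 270, 315, 450, 495} to give h(5) and h(6) values, at least one of which fails to be a partial sum of [36,90,135,216,270,540] and [4,15,24,80,80,240,240,240,480,480,480,640] respectively. -/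
lemma isPartialSum_iff (M : Multiset ℤ) (x : ℤ) :
    IsPartialSum M x ↔ x ∈ M.powerset.map Multiset.sum := by
  constructor
  · rintro ⟨s, hs, rfl⟩
    exact Multiset.mem_map.mpr ⟨s, Multiset.mem_powerset.mpr hs, rfl⟩
  · rintro hm
    obtain ⟨s, hs, rfl⟩ := Multiset.mem_map.mp hm
    exact ⟨s, Multiset.mem_powerset.mp hs, rfl⟩

theorem cubic_finite_check (h : ℕ → ℤ) (P : Polynomial ℚ)
    (h1 : h 1 = 9) (h2 : h 2 = 45)
    (hdeg : P.degree ≤ 3)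
    (hval : ∀ m ∈ Finset.Icc 1 6, (h m : ℚ) = P.eval (m : ℚ))
    (h3mem : h 3 ∈ ({0, 160, 320, 480, 640, 800} : Finset ℤ))
    (h3ge : h 2 ≤ h 3)
    (h4mem : h 4 ∈ ({0, 45, 180, 225, 270, 315, 450, 495} : Finset ℤ)) :
    ¬ (IsPartialSum {36, 90, 135, 216, 270, 540} (h 5) ∧
       IsPartialSum {4, 15, 24, 80, 80, 240, 240, 240, 480, 480, 480, 640} (h 6)) := by
  have hn : P.natDegree < 4 := by
    have h3' : P.natDegree ≤ 3 := Polynomial.natDegree_le_iff_degree_le.mpr hdeg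
    omega
  have e : ∀ x : ℚ, P.eval x =
      P.coeff 0 + P.coeff 1 * x + P.coeff 2 * x ^ 2 + P.coeff 3 * x ^ 3 := by
    intro x
    rw [Polynomial.eval_eq_sum_range' hn]
    simp [Finset.sum_range_succ]
  have hv : ∀ m ∈ Finset.Icc 1 6, (h m : ℚ) =
      P.coeff 0 + P.coeff 1 * m + P.coeff 2 * m ^ 2 + P.coeff 3 * m ^ 3 := by
    intro m hm; rw [hval m hm, e]
  have q1 := hv 1 (by decide)
  have q2 := hv 2 (by decide)
  have q3 := hv 3 (by decide)
  have q4 := hv 4 (by decide)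
  have q5 := hv 5 (by decide)
  have key : (h 5 : ℚ) = 4 * h 4 - 6 * h 3 + 4 * h 2 - h 1 := by
    push_cast at q1 q2 q3 q4 q5 ⊢
    linear_combination q5 - 4 * q4 + 6 * q3 - 4 * q2 + q1
  have key' : h 5 = 4 * h 4 - 6 * h 3 + 171 := by
    have : (h 5 : ℚ) = ((4 * h 4 - 6 * h 3 + 171 : ℤ) : ℚ) := by
      rw [key, h1, h2]; push_cast; ring
    exact_mod_cast this
  rintro ⟨hA, -⟩
  rw [isPartialSum_iff] at hA
  rw [key'] at hA
  simp only [Finset.mem_insert, Finset.mem_singleton] at h3mem h4mem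
  rw [h2] at h3ge
  rcases h3mem with h3e | h3e | h3e | h3e | h3e | h3e <;>
    rcases h4mem with h4e | h4e | h4e | h4e | h4e | h4e | h4e | h4e <;>
      first
        | omega
        | (rw [h3e, h4e] at hA; revert hA; decide)
end
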